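/- Let E be a real Banach space, y₀ ∈ E, 0 ≤ ε ≤ 1/2, let T₀ : E ≃L[ℝ] E be a continuous linear equivalence with inverse ℓ = T₀⁻¹, and let f : E → E and Df : E → (E →L[ℝ] E) be such that Df y₀ = T₀ (as a map), Df is a Gateaux derivative of f on the closed ball of radius 2 centred at y₀, and for every y in that closed ball (Df y − Df y₀) '' closedBall 0 1 ⊆ ε • ((Df y₀) '' closedBall 0 1). Set x₀ = f y₀. Then there exist an open set V ⊆ E and a map g : E → E such that: x₀ ∈ V, V ⊆ x₀ + T₀ '' closedBall 0 1, g x₀ = y₀, for every x ∈ V one has g x in the closed ball of radius 2 centred at y₀ and f (g x) = x, and for all x₁, x₂ ∈ V one has ‖g x₁ − g x₂‖ ≤ (1 − ε)⁻¹ · ‖ℓ (x₁ − x₂)‖. -/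
import Mathlib


open Pointwise Metric

variable {E : Type*} [NormedAddCommGroup E] [NormedSpace ℝ E]

/-- `Df` is a Gateaux derivative of `f` on the set `S`: for every `y ∈ S` and every
direction `v`, the map `t ↦ f (y + t • v)` has derivative `Df y v` at `t = 0`. -/
def HasGateauxDerivOn (f : E → E) (Df : E → E →L[ℝ] E) (S : Set E) : Prop :=
  ∀ y ∈ S, ∀ v : E, HasDerivAt (fun t : ℝ => f (y + t • v)) (Df y v) 0

/-- local inverse function (Lemma 7 of the paper, Banach-space case). With
`Df y₀ = T₀`, `ℓ = T₀⁻¹`, `0 ≤ ε ≤ 1/2` and the Colombeau-type condition on the closed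
ball of radius 2 about `y₀`, there is an open neighbourhood `V` of `x₀ = f y₀` contained in
`x₀ + T₀ '' B̄(0,1)` and a right inverse `g` of `f` on `V` with `g x₀ = y₀`, values in the
closed 2-ball about `y₀`, and `‖g x₁ − g x₂‖ ≤ (1 − ε)⁻¹ * ‖ℓ (x₁ − x₂)‖` on `V`. -/
theorem stmt6 [CompleteSpace E] (y₀ : E) (ε : ℝ) (hε0 : 0 ≤ ε) (hε1 : ε ≤ 1 / 2)
    (T₀ : E ≃L[ℝ] E) (f : E → E) (Df : E → E →L[ℝ] E)
    (hDfy₀ : ⇑(Df y₀) = ⇑T₀)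
    (hgat : HasGateauxDerivOn f Df (closedBall y₀ 2))
    (hcolo : ∀ y ∈ closedBall y₀ 2,
      ⇑(Df y - Df y₀) '' closedBall (0 : E) 1 ⊆ ε • (⇑(Df y₀) '' closedBall (0 : E) 1)) :
    ∃ (V : Set E) (g : E → E), IsOpen V ∧ f y₀ ∈ V ∧
      V ⊆ (f y₀ + ·) '' (⇑T₀ '' closedBall (0 : E) 1) ∧
      g (f y₀) = y₀ ∧
      (∀ x ∈ V, g x ∈ closedBall y₀ 2 ∧ f (g x) = x) ∧
      ∀ x₁ ∈ V, ∀ x₂ ∈ V, ‖g x₁ - g x₂‖ ≤ (1 - ε)⁻¹ * ‖T₀.symm (x₁ - x₂)‖ := by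
  rcases subsingleton_or_nontrivial E with hE | hE
  · refine ⟨Set.univ, fun _ => y₀, isOpen_univ, trivial, ?_, Subsingleton.elim _ _, ?_, ?_⟩
    · intro x _
      exact ⟨T₀ 0, ⟨0, mem_closedBall_self zero_le_one, rfl⟩, Subsingleton.elim _ _⟩
    · intro x _
      exact ⟨mem_closedBall_self (by norm_num), Subsingleton.elim _ _⟩
    · intro x₁ _ x₂ _
      simp only [sub_self, norm_zero]
      exact mul_nonneg (inv_nonneg.2 (by linarith)) (norm_nonneg _)
  -- Main case
  set s : Set E := closedBall y₀ 2 with hs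
  set ℓ : E →L[ℝ] E := (T₀.symm : E →L[ℝ] E) with hℓ
  set h : E → E := fun y => ℓ (f y) with hh
  have hy₀s : y₀ ∈ s := mem_closedBall_self (by norm_num)
  -- Step 1: pointwise bound on ℓ ∘ (Df y - T₀)
  have hbound : ∀ y ∈ s, ∀ u : E, ‖ℓ (Df y u - T₀ u)‖ ≤ ε * ‖u‖ := by
    intro y hy u
    rcases eq_or_ne u 0 with rfl | hu
    · simp
    have hnu : ‖u‖ ≠ 0 := norm_ne_zero_iff.2 hu
    have hv : ‖u‖⁻¹ • u ∈ closedBall (0 : E) 1 := by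
      rw [mem_closedBall_zero_iff, norm_smul, norm_inv, norm_norm,
        inv_mul_cancel₀ hnu]
    obtain ⟨z, ⟨w, hw, rfl⟩, hz2⟩ := hcolo y hy ⟨_, hv, rfl⟩
    have hz2' : ε • ((Df y₀) w) = (Df y - Df y₀) (‖u‖⁻¹ • u) := hz2
    have key : Df y u - T₀ u = ‖u‖ • (ε • (Df y₀) w) := by
      rw [hz2']
      have h9 : (Df y - Df y₀) (‖u‖ • ‖u‖⁻¹ • u) = Df y u - T₀ u := by
        rw [smul_smul, mul_inv_cancel₀ hnu, one_smul, ContinuousLinearMap.sub_apply,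
          hDfy₀]
      rw [← h9, map_smul]
    rw [key, hDfy₀]
    have h8 : ℓ (‖u‖ • ε • T₀ w) = ‖u‖ • ε • w := by
      rw [map_smul, map_smul]
      congr 1
      congr 1
      exact T₀.symm_apply_apply w
    rw [h8, norm_smul, norm_smul, norm_norm, Real.norm_eq_abs, abs_of_nonneg hε0]
    rw [mem_closedBall_zero_iff] at hw
    calc ‖u‖ * (ε * ‖w‖) ≤ ‖u‖ * (ε * 1) := by gcongr
      _ = ε * ‖u‖ := by ring
  -- Step 2: h approximates the identity on s
  have happrox : ApproximatesLinearOn h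
      ((ContinuousLinearEquiv.refl ℝ E : E ≃L[ℝ] E) : E →L[ℝ] E) s ε.toNNReal := by
    intro y₁ hy₁ y₂ hy₂
    set v : E := y₁ - y₂ with hv
    have hd : ∀ t ∈ Set.Icc (0 : ℝ) 1,
        HasDerivAt (fun t : ℝ => ℓ (f (y₂ + t • v)) - t • v)
          (ℓ ((Df (y₂ + t • v)) v) - v) t := by
      intro t ht
      have hyt : y₂ + t • v ∈ s := (convex_closedBall y₀ 2).add_smul_sub_mem hy₂ hy₁ ht
      have h1 := hgat _ hyt v
      have h1' : HasDerivAt (fun s : ℝ => f (y₂ + t • v + s • v))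
          ((Df (y₂ + t • v)) v) (t - t) := by rwa [sub_self]
      have h3 : HasDerivAt (fun t' : ℝ => t' - t) 1 t := by
        simpa using (hasDerivAt_id t).sub_const t
      have h2 : HasDerivAt (fun t' : ℝ => f (y₂ + t' • v)) ((Df (y₂ + t • v)) v) t := by
        have hfun : (fun t' : ℝ => f (y₂ + t' • v)) =
            (fun s : ℝ => f (y₂ + t • v + s • v)) ∘ (fun t' : ℝ => t' - t) := by
          funext t'
          simp only [Function.comp]
          congr 1
          rw [sub_smul]
          abel
        rw [hfun]
        simpa using HasDerivAt.scomp (h := fun t' : ℝ => t' - t) t h1' h3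
      have h4 := ℓ.hasFDerivAt.comp_hasDerivAt t h2
      have h5 : HasDerivAt (fun t' : ℝ => t' • v) v t := by
        simpa using (hasDerivAt_id t).smul_const v
      exact h4.sub h5
    have hbd : ∀ t ∈ Set.Ico (0 : ℝ) 1,
        ‖ℓ ((Df (y₂ + t • v)) v) - v‖ ≤ ε * ‖v‖ := by
      intro t ht
      have hyt : y₂ + t • v ∈ s :=
        (convex_closedBall y₀ 2).add_smul_sub_mem hy₂ hy₁ ⟨ht.1, ht.2.le⟩
      have heq : ℓ ((Df (y₂ + t • v)) v - T₀ v) = ℓ ((Df (y₂ + t • v)) v) - v := by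
        rw [ContinuousLinearMap.map_sub ℓ]
        congr 1
        exact T₀.symm_apply_apply v
      rw [← heq]
      exact hbound _ hyt v
    have hmvt := norm_image_sub_le_of_norm_deriv_le_segment_01'
      (fun t ht => (hd t ht).hasDerivWithinAt) hbd
    have hy21 : y₂ + (1 : ℝ) • v = y₁ := by rw [one_smul, hv]; abel
    rw [hy21, zero_smul, add_zero, sub_zero] at hmvt
    have goal_eq : h y₁ - h y₂ -
        ((ContinuousLinearEquiv.refl ℝ E : E ≃L[ℝ] E) : E →L[ℝ] E) (y₁ - y₂)
        = ℓ (f y₁) - (1 : ℝ) • v - ℓ (f y₂) := by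
      simp only [hh, ContinuousLinearEquiv.coe_refl, ContinuousLinearMap.coe_id,
        ContinuousLinearMap.id_apply, id_eq, one_smul, hv]
      abel
    rw [goal_eq, Real.coe_toNNReal _ hε0]
    exact hmvt
  classical
  have hcoe : (ε.toNNReal : ℝ) = ε := Real.coe_toNNReal _ hε0
  have hc : Subsingleton E ∨ ε.toNNReal <
      (‖(((ContinuousLinearEquiv.refl ℝ E).symm : E ≃L[ℝ] E) : E →L[ℝ] E)‖₊)⁻¹ := by
    refine Or.inr ?_
    have h1 : ‖(((ContinuousLinearEquiv.refl ℝ E).symm : E ≃L[ℝ] E) : E →L[ℝ] E)‖₊ = 1 := by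
      simp
    rw [h1, inv_one, ← Real.toNNReal_one]
    exact (Real.toNNReal_lt_toNNReal_iff one_pos).2 (by linarith)
  have hinj := happrox.injOn hc
  have antilip := happrox.antilipschitz hc
  -- a (nonlinear) right inverse of the identity
  have hsurj : Set.SurjOn h (closedBall y₀ 2) (closedBall (h y₀) ((1 - ε) * 2)) := by
    have hs2 := happrox.surjOn_closedBall_of_nonlinearRightInverse
      (⟨id, 1, fun y => by simp, fun y => by simp⟩ :
        ContinuousLinearMap.NonlinearRightInverse
          ((ContinuousLinearEquiv.refl ℝ E : E ≃L[ℝ] E) : E →L[ℝ] E))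
      (by norm_num : (0:ℝ) ≤ 2) (subset_refl s)
    have hrad : ((((1 : NNReal) : ℝ))⁻¹ - (ε.toNNReal : ℝ)) * 2 = (1 - ε) * 2 := by
      rw [NNReal.coe_one, inv_one, hcoe]
    rw [hrad] at hs2
    exact hs2
  set V : Set E := ⇑ℓ ⁻¹' ball (h y₀) 1 with hV
  have hVopen : IsOpen V := isOpen_ball.preimage ℓ.continuous
  have hx₀V : f y₀ ∈ V := by
    show ℓ (f y₀) ∈ ball (h y₀) 1
    exact mem_ball_self one_pos
  have hball_sub : ball (h y₀) 1 ⊆ closedBall (h y₀) ((1 - ε) * 2) :=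
    ball_subset_closedBall.trans (closedBall_subset_closedBall (by linarith))
  have hex : ∀ x ∈ V, ∃ y ∈ closedBall y₀ 2, h y = ℓ x := by
    intro x hx
    obtain ⟨y, hy, hyx⟩ := hsurj (hball_sub hx)
    exact ⟨y, hy, hyx⟩
  set g : E → E := fun x => if hx : x ∈ V then (hex x hx).choose else y₀ with hg
  have hgspec : ∀ x ∈ V, g x ∈ closedBall y₀ 2 ∧ h (g x) = ℓ x := by
    intro x hx
    have : g x = (hex x hx).choose := by rw [hg]; simp [hx]
    rw [this]
    exact ⟨(hex x hx).choose_spec.1, (hex x hx).choose_spec.2⟩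
  have hginv : ∀ x ∈ V, f (g x) = x := by
    intro x hx
    have := (hgspec x hx).2
    exact T₀.symm.injective this
  refine ⟨V, g, hVopen, hx₀V, ?_, ?_, ?_, ?_⟩
  · intro x hx
    have hx' : ‖ℓ x - ℓ (f y₀)‖ < 1 := by
      have : dist (ℓ x) (h y₀) < 1 := hx
      rwa [dist_eq_norm] at this
    refine ⟨x - f y₀, ⟨ℓ x - ℓ (f y₀), ?_, ?_⟩, ?_⟩
    · rw [mem_closedBall_zero_iff]
      exact hx'.le
    · rw [map_sub]
      simp [hℓ]
    · simp
  · have h1 := (hgspec _ hx₀V).1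
    have h2 := (hgspec _ hx₀V).2
    exact hinj h1 hy₀s h2
  · exact fun x hx => ⟨(hgspec x hx).1, hginv x hx⟩
  · intro x₁ hx₁ x₂ hx₂
    have h1 := (hgspec x₁ hx₁).1
    have h2 := (hgspec x₂ hx₂).1
    have hle := antilip.le_mul_dist ⟨g x₁, h1⟩ ⟨g x₂, h2⟩
    simp only [Set.restrict_apply, Subtype.dist_eq] at hle
    rw [(hgspec x₁ hx₁).2, (hgspec x₂ hx₂).2] at hle
    rw [dist_eq_norm, dist_eq_norm, ← map_sub] at hle
    have hK : ((((‖(((ContinuousLinearEquiv.refl ℝ E).symm : E ≃L[ℝ] E) : E →L[ℝ] E)‖₊)⁻¹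
        - ε.toNNReal)⁻¹ : NNReal) : ℝ) = (1 - ε)⁻¹ := by
      have h1' : ‖(((ContinuousLinearEquiv.refl ℝ E).symm : E ≃L[ℝ] E) : E →L[ℝ] E)‖₊ = 1 := by
        simp
      rw [h1', inv_one, NNReal.coe_inv, NNReal.coe_sub, NNReal.coe_one, hcoe]
      rw [← Real.toNNReal_one]
      exact Real.toNNReal_le_toNNReal (by linarith)
    rw [hK] at hle
    exact hle.trans_eq (by simp [hℓ])
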